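/- Let X, Θ be finite sets, φ, μ fully supported probability vectors, α ∈ (0,1), u : X × Θ → ℝ bounded. If P maximizes U(P) = E_P[u] − α D_KL(P|_ξ ∥ φ) − I_P(ξ,θ) subject to P|_θ = μ, then the marginal P|_ξ has full support: P(ξ) > 0 for every ξ with φ(ξ) > 0. -/
import Mathlib


open Finset Real

variable {X Θ : Type*} [Fintype X] [Fintype Θ]

/-- X-marginal of a joint distribution. -/
noncomputable def margX (P : X → Θ → ℝ) (ξ : X) : ℝ := ∑ θ, P ξ θ

/-- Conditional choice probability `P(ξ|θ) = P(ξ,θ)/μ(θ)`. -/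
noncomputable def ccp (P : X → Θ → ℝ) (μ : Θ → ℝ) (ξ : X) (θ : Θ) : ℝ := P ξ θ / μ θ

/-- The state-characteristic rational inattention objective. -/
noncomputable def Uobj (α : ℝ) (u : X → Θ → ℝ) (φ : X → ℝ) (μ : Θ → ℝ)
    (P : X → Θ → ℝ) : ℝ :=
  (∑ ξ, ∑ θ, P ξ θ * u ξ θ)
    - α * ∑ ξ, margX P ξ * Real.log (margX P ξ / φ ξ)
    - ∑ ξ, ∑ θ, P ξ θ * Real.log (ccp P μ ξ θ / margX P ξ)

/-- The integrand `Y(ξ,θ;P)`. -/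
noncomputable def Yfun (α : ℝ) (u : X → Θ → ℝ) (φ : X → ℝ) (μ : Θ → ℝ)
    (P : X → Θ → ℝ) (ξ : X) (θ : Θ) : ℝ :=
  u ξ θ - α * Real.log (margX P ξ / φ ξ) - Real.log (ccp P μ ξ θ / margX P ξ)

/-- Value of the objective at the perturbed plan `(1-t)P + t (δ_{ξ₀} ⊗ μ)`. -/
lemma Uobj_perturb [DecidableEq X]
    (α : ℝ) (u : X → Θ → ℝ) (φ : X → ℝ) (hφ0 : ∀ ξ, 0 < φ ξ)
    (μ : Θ → ℝ) (hμ0 : ∀ θ, 0 < μ θ) (hμ1 : ∑ θ, μ θ = 1)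
    (P : X → Θ → ℝ) (hP0 : ∀ ξ θ, 0 ≤ P ξ θ) (hPθ : ∀ θ, ∑ ξ, P ξ θ = μ θ)
    (ξ₀ : X) (hm0 : margX P ξ₀ = 0)
    (t : ℝ) (ht0 : 0 < t) (ht1 : t < 1) :
    Uobj α u φ μ (fun ξ θ => (1 - t) * P ξ θ + if ξ = ξ₀ then t * μ θ else 0)
      = Uobj α u φ μ P
        + t * ((∑ θ, μ θ * u ξ₀ θ) - (∑ ξ, ∑ θ, P ξ θ * u ξ θ)
            + α * (∑ ξ, margX P ξ * Real.log (margX P ξ / φ ξ))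
            + α * Real.log (φ ξ₀)
            + (∑ ξ, ∑ θ, P ξ θ * Real.log (ccp P μ ξ θ / margX P ξ)))
        - α * ((1 - t) * Real.log (1 - t) + t * Real.log t) := by
  set Q : X → Θ → ℝ := fun ξ θ => (1 - t) * P ξ θ + if ξ = ξ₀ then t * μ θ else 0 with hQ
  have ht1' : (0:ℝ) < 1 - t := by linarith
  have hPz : ∀ θ, P ξ₀ θ = 0 := by
    intro θ
    have := (Finset.sum_eq_zero_iff_of_nonneg (fun θ _ => hP0 ξ₀ θ)).mp hm0
    exact this θ (Finset.mem_univ θ)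
  have hmQ : ∀ ξ, margX Q ξ = (1 - t) * margX P ξ + (if ξ = ξ₀ then t else 0) := by
    intro ξ
    by_cases h : ξ = ξ₀
    · subst h
      simp only [margX, hQ, eq_self_iff_true, if_true]
      rw [Finset.sum_add_distrib, ← Finset.mul_sum, ← Finset.mul_sum, hμ1, mul_one]
    · simp only [margX, hQ, if_neg h, add_zero]
      rw [← Finset.mul_sum]
  have hmQ0 : margX Q ξ₀ = t := by rw [hmQ ξ₀, hm0]; simp
  have hmQne : ∀ ξ, ξ ≠ ξ₀ → margX Q ξ = (1 - t) * margX P ξ := by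
    intro ξ h; rw [hmQ ξ, if_neg h, add_zero]
  have hM1 : ∑ ξ, margX P ξ = 1 := by
    simp only [margX]
    rw [Finset.sum_comm]
    simp [hPθ, hμ1]
  -- first sum
  have h1 : (∑ ξ, ∑ θ, Q ξ θ * u ξ θ)
      = (1 - t) * (∑ ξ, ∑ θ, P ξ θ * u ξ θ) + t * ∑ θ, μ θ * u ξ₀ θ := by
    have hin : ∀ ξ, ∑ θ, Q ξ θ * u ξ θ
        = (1 - t) * (∑ θ, P ξ θ * u ξ θ)
          + (if ξ = ξ₀ then t * ∑ θ, μ θ * u ξ₀ θ else 0) := by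
      intro ξ
      by_cases h : ξ = ξ₀
      · subst h
        simp only [hQ, eq_self_iff_true, if_true]
        rw [Finset.mul_sum, Finset.mul_sum, ← Finset.sum_add_distrib]
        refine Finset.sum_congr rfl fun θ _ => ?_
        ring
      · simp only [hQ, if_neg h, add_zero]
        rw [Finset.mul_sum]
        refine Finset.sum_congr rfl fun θ _ => ?_
        ring
    rw [Finset.sum_congr rfl fun ξ _ => hin ξ, Finset.sum_add_distrib,
      ← Finset.mul_sum, Finset.sum_ite_eq' Finset.univ ξ₀]
    simp
  -- second sum
  have h2 : (∑ ξ, margX Q ξ * Real.log (margX Q ξ / φ ξ))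
      = (1 - t) * (∑ ξ, margX P ξ * Real.log (margX P ξ / φ ξ))
        + (1 - t) * Real.log (1 - t)
        + (t * Real.log t - t * Real.log (φ ξ₀)) := by
    have hin : ∀ ξ, margX Q ξ * Real.log (margX Q ξ / φ ξ)
        = (1 - t) * (margX P ξ * Real.log (margX P ξ / φ ξ))
          + (1 - t) * margX P ξ * Real.log (1 - t)
          + (if ξ = ξ₀ then t * Real.log t - t * Real.log (φ ξ₀) else 0) := by
      intro ξ
      by_cases h : ξ = ξ₀
      · subst h
        rw [hmQ0, hm0]
        simp only [eq_self_iff_true, if_true]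
        rw [Real.log_div (ne_of_gt ht0) (ne_of_gt (hφ0 ξ))]
        ring
      · rw [hmQne ξ h, if_neg h, add_zero]
        rcases eq_or_lt_of_le
            (show (0:ℝ) ≤ margX P ξ from Finset.sum_nonneg fun θ _ => hP0 ξ θ)
          with hm | hm
        · rw [← hm]; simp
        · rw [mul_div_assoc, Real.log_mul (ne_of_gt ht1')
            (ne_of_gt (div_pos hm (hφ0 ξ)))]
          ring
    rw [Finset.sum_congr rfl fun ξ _ => hin ξ, Finset.sum_add_distrib,
      Finset.sum_add_distrib, ← Finset.mul_sum, Finset.sum_ite_eq' Finset.univ ξ₀]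
    have hc : ∑ ξ, (1 - t) * margX P ξ * Real.log (1 - t)
        = (1 - t) * Real.log (1 - t) := by
      calc ∑ ξ, (1 - t) * margX P ξ * Real.log (1 - t)
          = ((1 - t) * Real.log (1 - t)) * ∑ ξ, margX P ξ := by
            rw [Finset.mul_sum]
            exact Finset.sum_congr rfl fun ξ _ => by ring
        _ = (1 - t) * Real.log (1 - t) := by rw [hM1, mul_one]
    rw [hc]
    simp
  -- third sum
  have h3 : (∑ ξ, ∑ θ, Q ξ θ * Real.log (ccp Q μ ξ θ / margX Q ξ))
      = (1 - t) * ∑ ξ, ∑ θ, P ξ θ * Real.log (ccp P μ ξ θ / margX P ξ) := by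
    have hin : ∀ ξ, ∑ θ, Q ξ θ * Real.log (ccp Q μ ξ θ / margX Q ξ)
        = (1 - t) * ∑ θ, P ξ θ * Real.log (ccp P μ ξ θ / margX P ξ) := by
      intro ξ
      by_cases h : ξ = ξ₀
      · subst h
        refine (Finset.sum_eq_zero fun θ _ => ?_).trans (by simp [hPz])
        have hq : Q ξ θ = t * μ θ := by simp [hQ, hPz θ]
        have hc : ccp Q μ ξ θ = t := by
          rw [ccp, hq, mul_div_assoc, div_self (ne_of_gt (hμ0 θ)), mul_one]
        rw [hc, hmQ0, div_self (ne_of_gt ht0), Real.log_one, mul_zero]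
      · rw [Finset.mul_sum]
        refine Finset.sum_congr rfl fun θ _ => ?_
        have hq : Q ξ θ = (1 - t) * P ξ θ := by simp [hQ, h]
        have hc : ccp Q μ ξ θ / margX Q ξ = ccp P μ ξ θ / margX P ξ := by
          rw [ccp, ccp, hq, hmQne ξ h, mul_div_assoc,
            mul_div_mul_left _ _ (ne_of_gt ht1')]
        rw [hc, hq]
        ring
    rw [Finset.sum_congr rfl fun ξ _ => hin ξ, ← Finset.mul_sum]
  simp only [Uobj, h1, h2, h3]
  ring


theorem optimal_marginal_full_support
    (α : ℝ) (hα : 0 < α) (hα1 : α < 1)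
    (u : X → Θ → ℝ)
    (φ : X → ℝ) (hφ0 : ∀ ξ, 0 < φ ξ) (hφ1 : ∑ ξ, φ ξ = 1)
    (μ : Θ → ℝ) (hμ0 : ∀ θ, 0 < μ θ) (hμ1 : ∑ θ, μ θ = 1)
    (P : X → Θ → ℝ)
    (hP0 : ∀ ξ θ, 0 ≤ P ξ θ) (hPθ : ∀ θ, ∑ ξ, P ξ θ = μ θ)
    (hmax : ∀ Q : X → Θ → ℝ, (∀ ξ θ, 0 ≤ Q ξ θ) → (∀ θ, ∑ ξ, Q ξ θ = μ θ) →
      Uobj α u φ μ Q ≤ Uobj α u φ μ P) :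
    ∀ ξ, 0 < φ ξ → 0 < margX P ξ := by
  classical
  intro ξ₀ hφξ₀
  by_contra hcon
  push_neg at hcon
  have hm0 : margX P ξ₀ = 0 :=
    le_antisymm hcon (Finset.sum_nonneg fun θ _ => hP0 ξ₀ θ)
  set C : ℝ := (∑ θ, μ θ * u ξ₀ θ) - (∑ ξ, ∑ θ, P ξ θ * u ξ θ)
      + α * (∑ ξ, margX P ξ * Real.log (margX P ξ / φ ξ))
      + α * Real.log (φ ξ₀)
      + (∑ ξ, ∑ θ, P ξ θ * Real.log (ccp P μ ξ θ / margX P ξ)) with hC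
  set t : ℝ := min (1/2) (Real.exp (C / α) / 2) with ht
  have ht0 : 0 < t := lt_min (by norm_num) (by positivity)
  have ht1 : t < 1 := lt_of_le_of_lt (min_le_left _ _) (by norm_num)
  have hlog : Real.log t < C / α := by
    rw [Real.log_lt_iff_lt_exp ht0]
    calc t ≤ Real.exp (C / α) / 2 := min_le_right _ _
      _ < Real.exp (C / α) := by linarith [Real.exp_pos (C / α)]
  have hkey := Uobj_perturb α u φ hφ0 μ hμ0 hμ1 P hP0 hPθ ξ₀ hm0 t ht0 ht1
  rw [← hC] at hkey
  have hQ0 : ∀ ξ θ, 0 ≤ (1 - t) * P ξ θ + (if ξ = ξ₀ then t * μ θ else 0) := by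
    intro ξ θ
    refine add_nonneg (mul_nonneg (by linarith) (hP0 ξ θ)) ?_
    split
    · exact mul_nonneg ht0.le (hμ0 θ).le
    · exact le_refl 0
  have hQθ : ∀ θ, ∑ ξ, ((1 - t) * P ξ θ + (if ξ = ξ₀ then t * μ θ else 0)) = μ θ := by
    intro θ
    rw [Finset.sum_add_distrib, ← Finset.mul_sum, hPθ θ,
      Finset.sum_ite_eq' Finset.univ ξ₀ (fun _ => t * μ θ)]
    simp
    ring
  have hle := hmax _ hQ0 hQθ
  rw [hkey] at hle
  have hαlog : α * Real.log t < C := by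
    rw [lt_div_iff₀ hα] at hlog
    linarith
  have hA : 0 < t * (C - α * Real.log t) := mul_pos ht0 (by linarith)
  have hl1 : Real.log (1 - t) ≤ 0 := Real.log_nonpos (by linarith) (by linarith)
  have hB : α * ((1 - t) * Real.log (1 - t)) ≤ 0 := by
    nlinarith [mul_nonneg (mul_nonneg hα.le (by linarith : (0:ℝ) ≤ 1 - t))
      (neg_nonneg.mpr hl1)]
  nlinarith [hle, hA, hB]
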